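/- arXiv:1507.06580 — 2 statements merged into one kernel-verified Lean document; each statement's English description precedes it below -/
import Mathlib

section
/- Let f, g : ℝ → ℝ be convex functions with f nonnegative. Let x₀, α ∈ ℝ with α - 1 < x₀ < α, suppose g(α) < -ε for some ε > 0, and suppose f is nondecreasing on (x₀, ∞) (i.e., f'(x) ≥ 0 for all x > x₀). Let μ be a probability measure supported on [x₀, α] whose density with respect to Lebesgue measure is bounded above by some β > 1. Then μ({x : |f(x) - g(x)| > (1/(4β)) · max(ε, f(x))}) ≥ 1/2. -/
open MeasureTheory

theorem stmt0 (f g : ℝ → ℝ) (hf : ConvexOn ℝ Set.univ f) (hg : ConvexOn ℝ Set.univ g)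
    (hf0 : ∀ x, 0 ≤ f x) (x₀ α ε β : ℝ) (hx₀ : α - 1 < x₀) (hx₀' : x₀ < α)
    (hε : 0 < ε) (hgα : g α < -ε)
    (hmono : MonotoneOn f (Set.Ioi x₀))
    (μ : Measure ℝ) [IsProbabilityMeasure μ]
    (hsupp : μ (Set.Icc x₀ α)ᶜ = 0)
    (hβ : 1 < β)
    (hdens : ∀ s : Set ℝ, μ s ≤ ENNReal.ofReal β * volume s) :
    (1 : ENNReal) / 2 ≤ μ {x : ℝ | |f x - g x| > (1 / (4 * β)) * max ε (f x)} := by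
  have hβ0 : (0:ℝ) < β := by linarith
  set c : ℝ := 1 / (4 * β) with hc
  have hc0 : 0 < c := by positivity
  have hc4 : 4 * c * β = 1 := by rw [hc]; field_simp
  set S : Set ℝ := {x | |f x - g x| ≤ c * max ε (f x)} with hS
  set T : Set ℝ := S ∩ Set.Ioc x₀ α with hT
  -- key: any two good points in (x₀, α] are within 2c of each other
  have key : ∀ a ∈ T, ∀ b ∈ T, a < b → b - a ≤ 2 * c := by
    rintro a ⟨haS, hax⟩ b ⟨hbS, hbx⟩ hab
    by_contra hcon
    push_neg at hcon
    have hax0 : x₀ < a := hax.1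
    have haα : a < α := lt_of_lt_of_le hab hbx.2
    have hden : 0 < α - a := by linarith
    set lam : ℝ := (α - b) / (α - a) with hlam
    have hlam0 : 0 ≤ lam := div_nonneg (by linarith [hbx.2]) hden.le
    have hlam1 : lam ≤ 1 := (div_le_one hden).2 (by linarith)
    have hsval : 1 - lam = (b - a) / (α - a) := by
      rw [eq_div_iff hden.ne', hlam]
      field_simp
      ring
    have hb' : lam * a + (1 - lam) * α = b := by
      rw [hlam]
      field_simp
      ring
    have hcomb : g b ≤ lam * g a + (1 - lam) * g α := by
      have h := hg.2 (Set.mem_univ a) (Set.mem_univ α) hlam0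
        (show (0:ℝ) ≤ 1 - lam by linarith)
        (show lam + (1 - lam) = 1 by ring)
      rw [smul_eq_mul, smul_eq_mul, hb'] at h
      exact h
    set M : ℝ := max ε (f b) with hM
    have hMε : ε ≤ M := le_max_left _ _
    have hMf : f b ≤ M := le_max_right _ _
    have hM0 : 0 < M := lt_of_lt_of_le hε hMε
    have hMfb : M ≤ f b + ε := max_le (by linarith [hf0 b]) (by linarith)
    have hfa : f a ≤ f b := hmono (Set.mem_Ioi.2 hax0) (Set.mem_Ioi.2 hbx.1) hab.le
    have hMa : max ε (f a) ≤ M := max_le_max le_rfl hfa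
    have haS' := abs_le.1 (show |f a - g a| ≤ c * max ε (f a) from haS)
    have hbS' := abs_le.1 (show |f b - g b| ≤ c * max ε (f b) from hbS)
    have hga : g a ≤ f b + c * M := by
      have h1 : c * max ε (f a) ≤ c * M := mul_le_mul_of_nonneg_left hMa hc0.le
      have := haS'.2
      linarith
    have hgb : f b - c * M ≤ g b := by
      have := hbS'.2
      linarith
    -- 2c < 1 - lam
    have hs2c : 2 * c < 1 - lam := by
      rw [hsval]
      have h1 : b - a ≤ (b - a) / (α - a) := by
        rw [le_div_iff₀ hden]
        nlinarith
      linarith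
    have h1 : lam * g a ≤ lam * (f b + c * M) := mul_le_mul_of_nonneg_left hga hlam0
    have h2 : (1 - lam) * g α ≤ (1 - lam) * (-ε) :=
      mul_le_mul_of_nonneg_left hgα.le (by linarith)
    nlinarith [mul_pos (show (0:ℝ) < 1 - lam - 2 * c by linarith) hM0,
      mul_nonneg (show (0:ℝ) ≤ 1 - lam by linarith) (sub_nonneg.2 hMfb),
      mul_nonneg hc0.le hM0.le, mul_nonneg hlam0 hM0.le,
      mul_nonneg (show (0:ℝ) ≤ 1 - lam by linarith) (hf0 b)]
  -- T has small Lebesgue measure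
  have hvolT : volume T ≤ ENNReal.ofReal (2 * c) := by
    rcases T.eq_empty_or_nonempty with h | ⟨t, ht⟩
    · simp [h]
    · have hbdd : BddAbove T := ⟨α, fun x hx => hx.2.2⟩
      set m := sSup T with hm
      have hsub : T ⊆ Set.Icc (m - 2 * c) m := by
        intro x hx
        refine ⟨?_, le_csSup hbdd hx⟩
        have hle : m ≤ x + 2 * c := by
          refine csSup_le ⟨t, ht⟩ (fun b hb => ?_)
          rcases le_or_gt b x with h' | h'
          · linarith
          · have := key x hx b hb h'
            linarith
        linarith
      calc volume T ≤ volume (Set.Icc (m - 2 * c) m) := measure_mono hsub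
        _ = ENNReal.ofReal (2 * c) := by
            rw [Real.volume_Icc]
            congr 1
            ring
  -- μ S ≤ 1/2
  have hScover : S ⊆ {x₀} ∪ T ∪ (Set.Icc x₀ α)ᶜ := by
    intro x hx
    by_cases hmem : x ∈ Set.Icc x₀ α
    · rcases eq_or_lt_of_le hmem.1 with h | h
      · exact Or.inl (Or.inl h.symm)
      · exact Or.inl (Or.inr ⟨hx, h, hmem.2⟩)
    · exact Or.inr hmem
  have hhalf : ENNReal.ofReal β * ENNReal.ofReal (2 * c) = 1 / 2 := by
    rw [← ENNReal.ofReal_mul hβ0.le]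
    have : β * (2 * c) = 1 / 2 := by nlinarith
    rw [this]
    rw [show (1:ℝ)/2 = ((2:ℝ))⁻¹ by norm_num, ENNReal.ofReal_inv_of_pos (by norm_num)]
    norm_num
  have hμS : μ S ≤ 1 / 2 := by
    calc μ S ≤ μ ({x₀} ∪ T ∪ (Set.Icc x₀ α)ᶜ) := measure_mono hScover
      _ ≤ μ ({x₀} ∪ T) + μ (Set.Icc x₀ α)ᶜ := measure_union_le _ _
      _ ≤ (μ {x₀} + μ T) + μ (Set.Icc x₀ α)ᶜ := by
          gcongr
          exact measure_union_le _ _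
      _ ≤ (0 + ENNReal.ofReal β * ENNReal.ofReal (2 * c)) + 0 := by
          gcongr
          · have := hdens {x₀}
            simpa [Real.volume_singleton] using this
          · exact le_trans (hdens T) (by gcongr)
          · exact le_of_eq hsupp
      _ = 1 / 2 := by rw [hhalf, zero_add, add_zero]
  -- conclude
  have hcov : (Set.univ : Set ℝ) ⊆
      {x : ℝ | |f x - g x| > c * max ε (f x)} ∪ S := by
    intro x _
    rcases lt_or_ge (c * max ε (f x)) (|f x - g x|) with h | h
    · exact Or.inl h
    · exact Or.inr h
  have hone : (1 : ENNReal) ≤ μ {x : ℝ | |f x - g x| > c * max ε (f x)} + μ S := by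
    calc (1 : ENNReal) = μ Set.univ := (measure_univ).symm
      _ ≤ μ ({x : ℝ | |f x - g x| > c * max ε (f x)} ∪ S) := measure_mono hcov
      _ ≤ _ := measure_union_le _ _
  have h12 : (1 : ENNReal) ≤ μ {x : ℝ | |f x - g x| > c * max ε (f x)} + 1 / 2 :=
    le_trans hone (by gcongr)
  have hne : (1 / 2 : ENNReal) ≠ ⊤ := by simp
  refine (ENNReal.add_le_add_iff_right hne).1 ?_
  calc (1:ENNReal) / 2 + 1 / 2 = 1 := ENNReal.add_halves 1
    _ ≤ _ := h12
end

section
/- Let L < 0 and let Y be a random variable taking values in [-1, ∞) with E[Y] = |L| and P(Y > 1) = 0 (i.e., Y ∈ [-1,1] with mean |L| > 0). Then there exists ε ∈ [|L|/2, 1] such that P(Y ≥ ε) ≥ |L| / (2 log(2/|L|) · ε). -/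
open MeasureTheory

theorem stmt1 (L : ℝ) (hL : L < 0) (ν : Measure ℝ) [IsProbabilityMeasure ν]
    (hsupp : ν (Set.Icc (-1 : ℝ) 1)ᶜ = 0)
    (hmean : ∫ x, x ∂ν = |L|) :
    ∃ ε : ℝ, |L| / 2 ≤ ε ∧ ε ≤ 1 ∧
      ENNReal.ofReal (|L| / (2 * Real.log (2 / |L|) * ε)) ≤ ν {x : ℝ | ε ≤ x} := by
  set c := |L| with hcdef
  have hc0 : 0 < c := abs_pos.mpr hL.ne
  have hae : ∀ᵐ x ∂ν, x ∈ Set.Icc (-1 : ℝ) 1 := by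
    rw [ae_iff]
    convert hsupp using 2
    ext x; simp
  have hid_int : Integrable (fun x : ℝ => x) ν := by
    refine (integrable_const (1 : ℝ)).mono' measurable_id.aestronglyMeasurable ?_
    filter_upwards [hae] with x hx
    rw [Real.norm_eq_abs]
    exact abs_le.mpr ⟨hx.1, hx.2⟩
  have hc1 : c ≤ 1 := by
    rw [← hmean]
    calc ∫ x, x ∂ν ≤ ∫ _, (1 : ℝ) ∂ν := by
          refine integral_mono_ae hid_int (integrable_const 1) ?_
          filter_upwards [hae] with x hx using hx.2
      _ = 1 := by simp
  have hlog : 0 < Real.log (2 / c) := Real.log_pos (by rw [lt_div_iff₀ hc0]; linarith)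
  by_contra hcon
  push_neg at hcon
  set k := c / (2 * Real.log (2 / c)) with hkdef
  have hk0 : 0 < k := div_pos hc0 (by positivity)
  set G : ℝ → ℝ := fun t => (ν {a : ℝ | t < a}).toReal with hGdef
  have hGanti : Antitone G := by
    intro s t hst
    exact ENNReal.toReal_mono (measure_ne_top ν _)
      (measure_mono (fun a ha => lt_of_le_of_lt hst ha))
  have hGmeas : Measurable G := hGanti.measurable
  have hGnn : ∀ t, 0 ≤ G t := fun t => ENNReal.toReal_nonneg
  have hGle1 : ∀ t, G t ≤ 1 := fun t =>
    ENNReal.toReal_le_of_le_ofReal zero_le_one (by simpa using prob_le_one)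
  have hG0 : ∀ t ∈ Set.Ioi (1 : ℝ), G t = 0 := by
    intro t ht
    have h0 : ν {a : ℝ | t < a} = 0 := by
      refine measure_mono_null ?_ hsupp
      intro a (ha : t < a)
      simp only [Set.mem_compl_iff, Set.mem_Icc, not_and_or, not_le]
      right
      have : (1 : ℝ) < t := ht
      linarith
    simp [hGdef, h0]
  have htail : ∀ t ∈ Set.Ioc (c / 2) 1, G t < k / t := by
    intro t ht
    have h1 := hcon t (le_of_lt ht.1) ht.2
    have h2 : ν {a : ℝ | t < a} ≤ ν {x : ℝ | t ≤ x} :=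
      measure_mono (fun a (ha : t < a) => le_of_lt ha)
    have h4 : (ν {a : ℝ | t < a}).toReal < c / (2 * Real.log (2 / c) * t) :=
      (ENNReal.lt_ofReal_iff_toReal_lt (measure_ne_top ν _)).mp (lt_of_le_of_lt h2 h1)
    have heq : c / (2 * Real.log (2 / c) * t) = k / t := by rw [hkdef, div_div]
    rwa [heq] at h4
  have hmax_int : Integrable (fun x : ℝ => max x 0) ν := by
    refine (integrable_const (1 : ℝ)).mono'
      (measurable_id.max measurable_const).aestronglyMeasurable ?_
    filter_upwards [hae] with x hx
    rw [Real.norm_eq_abs, abs_le]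
    exact ⟨by have := le_max_right x 0; linarith, max_le hx.2 zero_le_one⟩
  have hlayer : ∫ x, max x 0 ∂ν = ∫ t in Set.Ioi (0 : ℝ), (ν {a : ℝ | t < max a 0}).toReal :=
    hmax_int.integral_eq_integral_meas_lt (Filter.Eventually.of_forall fun x => le_max_right x 0)
  have hlayer' : ∫ x, max x 0 ∂ν = ∫ t in Set.Ioi (0 : ℝ), G t := by
    rw [hlayer]
    refine setIntegral_congr_fun measurableSet_Ioi ?_
    intro t ht
    have hst : {a : ℝ | t < max a 0} = {a : ℝ | t < a} := by
      ext a
      simp only [Set.mem_setOf_eq, lt_max_iff]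
      constructor
      · rintro (h | h)
        · exact h
        · exact absurd h (not_lt.mpr (le_of_lt ht))
      · exact Or.inl
    dsimp only
    rw [hst]
  have hGint : ∀ s : Set ℝ, MeasurableSet s → volume s < ⊤ → IntegrableOn G s := by
    intro s hs hvol
    have hconst : IntegrableOn (fun _ : ℝ => (1 : ℝ)) s := integrableOn_const hvol.ne
    refine hconst.mono' hGmeas.aestronglyMeasurable.restrict ?_
    refine Filter.Eventually.of_forall fun t => ?_
    rw [Real.norm_eq_abs, abs_of_nonneg (hGnn t)]
    exact hGle1 t
  have hGint1 : IntegrableOn G (Set.Ioc 0 (c / 2)) := hGint _ measurableSet_Ioc measure_Ioc_lt_top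
  have hGint2 : IntegrableOn G (Set.Ioc (c / 2) 1) := hGint _ measurableSet_Ioc measure_Ioc_lt_top
  have hGint3 : IntegrableOn G (Set.Ioi 1) :=
    (integrableOn_congr_fun hG0 measurableSet_Ioi).mpr integrableOn_zero
  have hGzero3 : ∫ t in Set.Ioi (1 : ℝ), G t = 0 := by
    rw [setIntegral_congr_fun measurableSet_Ioi hG0]
    simp
  -- split
  have hdisj2 : Disjoint (Set.Ioc (c / 2) (1 : ℝ)) (Set.Ioi (1 : ℝ)) := by
    rw [Set.disjoint_left]
    intro t ht1 ht2
    exact absurd ht1.2 (not_le.mpr ht2)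
  have hdisj1 : Disjoint (Set.Ioc 0 (c / 2)) (Set.Ioi (c / 2)) := by
    rw [Set.disjoint_left]
    intro t ht1 ht2
    exact absurd ht1.2 (not_le.mpr ht2)
  have hu2 : Set.Ioc (c / 2) (1 : ℝ) ∪ Set.Ioi 1 = Set.Ioi (c / 2) :=
    Set.Ioc_union_Ioi_eq_Ioi (by linarith)
  have hu1 : Set.Ioc (0 : ℝ) (c / 2) ∪ Set.Ioi (c / 2) = Set.Ioi 0 :=
    Set.Ioc_union_Ioi_eq_Ioi (by linarith)
  have hsplit2 : ∫ t in Set.Ioi (c / 2), G t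
      = (∫ t in Set.Ioc (c / 2) 1, G t) + ∫ t in Set.Ioi (1 : ℝ), G t := by
    rw [← hu2]
    exact setIntegral_union hdisj2 measurableSet_Ioi hGint2 hGint3
  have hsplit1 : ∫ t in Set.Ioi (0 : ℝ), G t
      = (∫ t in Set.Ioc 0 (c / 2), G t) + ∫ t in Set.Ioi (c / 2), G t := by
    rw [← hu1]
    refine setIntegral_union hdisj1 measurableSet_Ioi hGint1 ?_
    rw [← hu2]
    exact hGint2.union hGint3
  -- estimate A
  have hA : ∫ t in Set.Ioc (0 : ℝ) (c / 2), G t ≤ c / 2 := by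
    calc ∫ t in Set.Ioc (0 : ℝ) (c / 2), G t ≤ ∫ _ in Set.Ioc (0 : ℝ) (c / 2), (1 : ℝ) := by
          refine setIntegral_mono_on hGint1 (integrableOn_const measure_Ioc_lt_top.ne)
            measurableSet_Ioc fun t _ => hGle1 t
      _ = c / 2 := by
          rw [setIntegral_const]
          simp [Real.volume_Ioc, ENNReal.toReal_ofReal (by linarith : (0:ℝ) ≤ c / 2)]
          positivity
  -- the bound function and its integral
  have hφint : IntegrableOn (fun t : ℝ => k / t) (Set.Ioc (c / 2) 1) := by
    have : IntervalIntegrable (fun t : ℝ => k / t) volume (c / 2) 1 := by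
      apply ContinuousOn.intervalIntegrable
      apply ContinuousOn.div continuousOn_const continuousOn_id
      intro t ht
      rw [Set.uIcc_of_le (by linarith : c / 2 ≤ 1)] at ht
      exact ne_of_gt (lt_of_lt_of_le (by linarith) ht.1)
    exact this.1
  have hφval : ∫ t in Set.Ioc (c / 2) 1, k / t = c / 2 := by
    rw [← intervalIntegral.integral_of_le (by linarith : c / 2 ≤ 1)]
    have : ∀ t : ℝ, k / t = k * t⁻¹ := fun t => div_eq_mul_inv k t
    simp_rw [this]
    rw [intervalIntegral.integral_const_mul, integral_inv_of_pos (by linarith) one_pos]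
    rw [one_div_div]
    rw [hkdef]
    field_simp
  -- strict inequality on B
  have hB : ∫ t in Set.Ioc (c / 2) 1, G t < c / 2 := by
    have hD : 0 < ∫ t in Set.Ioc (c / 2) 1, (k / t - G t) := by
      rw [setIntegral_pos_iff_support_of_nonneg_ae]
      · have hsub : Set.Ioc (c / 2) 1 ⊆ Function.support (fun t => k / t - G t) := by
          intro t ht
          exact ne_of_gt (sub_pos.mpr (htail t ht))
        rw [Set.inter_eq_right.mpr hsub, Real.volume_Ioc, ENNReal.ofReal_pos]
        linarith
      · rw [Filter.EventuallyLE, ae_restrict_iff' measurableSet_Ioc]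
        exact Filter.Eventually.of_forall fun t ht => le_of_lt (sub_pos.mpr (htail t ht))
      · exact hφint.sub hGint2
    have hsub := integral_sub hφint hGint2
    rw [hsub] at hD
    linarith [hφval]
  -- final chain
  have hmono : ∫ x, x ∂ν ≤ ∫ x, max x 0 ∂ν :=
    integral_mono hid_int hmax_int fun x => le_max_left x 0
  rw [hmean, hlayer', hsplit1, hsplit2, hGzero3] at hmono
  linarith [hA, hB, hmono]
end
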